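/- The recursive splitting algorithm Split(C, D, f, H), which returns {C} if H(D) holds and otherwise quad-splits C and recurses on each quarter with the restricted data, terminates and returns a partition of C, provided the homogeneity condition H always holds on data sets with fewer than some fixed number N of elements and D is finite. -/
import Mathlib


open scoped Classical

/-- A half-open axis-aligned cell `[a,b) × [c,d)` given by the quadruple `(a,b,c,d)`. -/
abbrev QuadCell : Type := ℝ × ℝ × ℝ × ℝ

/-- The set of points of a cell. -/
def QuadCell.toSet (r : QuadCell) : Set (ℝ × ℝ) :=
  {p | r.1 ≤ p.1 ∧ p.1 < r.2.1 ∧ r.2.2.1 ≤ p.2 ∧ p.2 < r.2.2.2}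

/-- The `i`-th quarter of a cell under quad-tree splitting at the midpoints. -/
noncomputable def QuadCell.quarter (r : QuadCell) (i : Fin 4) : QuadCell :=
  let a := r.1; let b := r.2.1; let c := r.2.2.1; let d := r.2.2.2
  let mx := (a + b) / 2; let my := (c + d) / 2
  match i with
  | 0 => (a, mx, c, my)
  | 1 => (a, mx, my, d)
  | 2 => (mx, b, c, my)
  | 3 => (mx, b, my, d)

/-- `SplitSpec H C D L` holds when `L` is a possible (finite, terminating) result of
the recursive algorithm `Split(C, D, f, H)`: return `[C]` if the homogeneity condition
`H` holds of the data `D` in `C`, and otherwise quad-split `C` and recurse on each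
quarter with the data falling in that quarter.  (The data set is modelled as a finite
set of points of the plane, i.e. `f` is injective.) -/
inductive SplitSpec (H : Finset (ℝ × ℝ) → Prop) :
    QuadCell → Finset (ℝ × ℝ) → List QuadCell → Prop
  | homog {C : QuadCell} {D : Finset (ℝ × ℝ)} : H D → SplitSpec H C D [C]
  | split {C : QuadCell} {D : Finset (ℝ × ℝ)} {L : Fin 4 → List QuadCell} :
      ¬ H D →
      (∀ i : Fin 4,
        SplitSpec H (C.quarter i)
          (D.filter (fun p => p ∈ (C.quarter i).toSet)) (L i)) →
      SplitSpec H C D (L 0 ++ L 1 ++ L 2 ++ L 3)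

lemma QuadCell.quarters_cover (C : QuadCell) :
    (C.quarter 0).toSet ∪ (C.quarter 1).toSet ∪ (C.quarter 2).toSet ∪ (C.quarter 3).toSet
      = C.toSet := by
  obtain ⟨a, b, c, d⟩ := C
  ext p
  simp only [Set.mem_union, QuadCell.toSet, QuadCell.quarter, Set.mem_setOf_eq]
  constructor
  · rintro (((⟨h1, h2, h3, h4⟩ | ⟨h1, h2, h3, h4⟩) | ⟨h1, h2, h3, h4⟩) | ⟨h1, h2, h3, h4⟩) <;>
      exact ⟨by linarith, by linarith, by linarith, by linarith⟩
  · rintro ⟨h1, h2, h3, h4⟩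
    rcases lt_or_ge p.1 ((a + b) / 2) with hx | hx <;>
      rcases lt_or_ge p.2 ((c + d) / 2) with hy | hy
    · exact Or.inl (Or.inl (Or.inl ⟨h1, hx, h3, hy⟩))
    · exact Or.inl (Or.inl (Or.inr ⟨h1, hx, hy, h4⟩))
    · exact Or.inl (Or.inr ⟨hx, h2, h3, hy⟩)
    · exact Or.inr ⟨hx, h2, hy, h4⟩

lemma QuadCell.quarters_disjoint (C : QuadCell) {i j : Fin 4} (hij : i ≠ j) :
    Disjoint (C.quarter i).toSet (C.quarter j).toSet := by
  obtain ⟨a, b, c, d⟩ := C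
  rw [Set.disjoint_left]
  intro p hpi hpj
  fin_cases i <;> fin_cases j <;>
    simp only [QuadCell.quarter, QuadCell.toSet, Set.mem_setOf_eq] at hpi hpj <;>
    first
      | exact absurd rfl hij
      | (obtain ⟨h1, h2, h3, h4⟩ := hpi; obtain ⟨h5, h6, h7, h8⟩ := hpj; linarith)

lemma pairwise_append4 {L : Fin 4 → List QuadCell} {S : Fin 4 → Set (ℝ × ℝ)}
    (hp : ∀ i, (L i).Pairwise (fun r r' => Disjoint r.toSet r'.toSet))
    (hsub : ∀ i, ∀ r ∈ L i, QuadCell.toSet r ⊆ S i)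
    (hdisj : ∀ i j : Fin 4, i ≠ j → Disjoint (S i) (S j)) :
    (L 0 ++ L 1 ++ L 2 ++ L 3).Pairwise
      (fun r r' => Disjoint (QuadCell.toSet r) (QuadCell.toSet r')) := by
  have key : ∀ i j : Fin 4, i ≠ j → ∀ r ∈ L i, ∀ r' ∈ L j,
      Disjoint (QuadCell.toSet r) (QuadCell.toSet r') :=
    fun i j hij r hr r' hr' => (hdisj i j hij).mono (hsub i r hr) (hsub j r' hr')
  simp only [List.pairwise_append, List.mem_append]
  refine ⟨⟨⟨hp 0, hp 1, key 0 1 (by decide)⟩, hp 2, ?_⟩, hp 3, ?_⟩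
  · rintro r (hr | hr) r' hr'
    · exact key 0 2 (by decide) r hr r' hr'
    · exact key 1 2 (by decide) r hr r' hr'
  · rintro r ((hr | hr) | hr) r' hr'
    · exact key 0 3 (by decide) r hr r' hr'
    · exact key 1 3 (by decide) r hr r' hr'
    · exact key 2 3 (by decide) r hr r' hr'

lemma biUnion_append (l1 l2 : List QuadCell) :
    (⋃ r ∈ l1 ++ l2, QuadCell.toSet r)
      = (⋃ r ∈ l1, QuadCell.toSet r) ∪ ⋃ r ∈ l2, QuadCell.toSet r := by
  ext p
  simp only [Set.mem_iUnion, Set.mem_union, List.mem_append]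
  constructor
  · rintro ⟨r, (hr | hr), hp⟩
    · exact Or.inl ⟨r, hr, hp⟩
    · exact Or.inr ⟨r, hr, hp⟩
  · rintro (⟨r, hr, hp⟩ | ⟨r, hr, hp⟩)
    · exact ⟨r, Or.inl hr, hp⟩
    · exact ⟨r, Or.inr hr, hp⟩

lemma split_key (N : ℕ) (hN : 2 ≤ N) (H : Finset (ℝ × ℝ) → Prop)
    (hH : ∀ D : Finset (ℝ × ℝ), D.card < N → H D) (δ : ℝ) :
    ∀ k : ℕ, ∀ C : QuadCell,
      C.2.1 - C.1 < δ * 2 ^ k → C.2.2.2 - C.2.2.1 < δ * 2 ^ k →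
      ∀ D : Finset (ℝ × ℝ), (∀ p ∈ D, p ∈ C.toSet) →
      (∀ p ∈ D, ∀ q ∈ D, p ≠ q → δ ≤ dist p q) →
      ∃ L : List QuadCell, SplitSpec H C D L ∧
        (⋃ r ∈ L, QuadCell.toSet r) = C.toSet ∧
        L.Pairwise (fun r r' => Disjoint (QuadCell.toSet r) (QuadCell.toSet r')) := by
  intro k
  induction k with
  | zero =>
    intro C h1 h2 D hD hsep
    have hcard : D.card ≤ 1 := by
      rw [Finset.card_le_one]
      intro p hp q hq
      by_contra hpq
      have hd := hsep p hp q hq hpq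
      obtain ⟨ha1, ha2, ha3, ha4⟩ := hD p hp
      obtain ⟨hb1, hb2, hb3, hb4⟩ := hD q hq
      have hx : dist p.1 q.1 < δ := by
        rw [Real.dist_eq, abs_sub_lt_iff]
        constructor <;> simp only [pow_zero, mul_one] at h1 <;> linarith
      have hy : dist p.2 q.2 < δ := by
        rw [Real.dist_eq, abs_sub_lt_iff]
        constructor <;> simp only [pow_zero, mul_one] at h2 <;> linarith
      have : dist p q < δ := by
        rw [Prod.dist_eq]
        exact max_lt hx hy
      linarith
    have hHD : H D := hH D (lt_of_lt_of_le (Nat.lt_of_le_of_lt hcard Nat.one_lt_two) hN)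
    exact ⟨[C], SplitSpec.homog hHD, by simp, by simp⟩
  | succ k ih =>
    intro C h1 h2 D hD hsep
    by_cases hHD : H D
    · exact ⟨[C], SplitSpec.homog hHD, by simp, by simp⟩
    have hq : ∀ i : Fin 4,
        ∃ L : List QuadCell,
          SplitSpec H (C.quarter i) (D.filter (fun p => p ∈ (C.quarter i).toSet)) L ∧
          (⋃ r ∈ L, QuadCell.toSet r) = (C.quarter i).toSet ∧
          L.Pairwise (fun r r' => Disjoint (QuadCell.toSet r) (QuadCell.toSet r')) := by
      intro i
      obtain ⟨a, b, c, d⟩ := C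
      have hpow : δ * 2 ^ (k + 1) = δ * 2 ^ k * 2 := by ring
      rw [hpow] at h1 h2
      apply ih
      · fin_cases i <;> simp [QuadCell.quarter] <;> linarith
      · fin_cases i <;> simp [QuadCell.quarter] <;> linarith
      · intro p hp
        exact (Finset.mem_filter.1 hp).2
      · intro p hp q hq' hpq
        exact hsep p (Finset.mem_filter.1 hp).1 q (Finset.mem_filter.1 hq').1 hpq
    choose L hspec hcover hpw using hq
    have hsub : ∀ i : Fin 4, ∀ r ∈ L i, QuadCell.toSet r ⊆ (C.quarter i).toSet := by
      intro i r hr x hx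
      rw [← hcover i]
      exact Set.mem_biUnion hr hx
    refine ⟨L 0 ++ L 1 ++ L 2 ++ L 3, SplitSpec.split hHD hspec, ?_, ?_⟩
    · rw [biUnion_append, biUnion_append, biUnion_append,
        hcover 0, hcover 1, hcover 2, hcover 3, QuadCell.quarters_cover]
    · exact pairwise_append4 hpw hsub (fun i j hij => C.quarters_disjoint hij)

/-- The recursive splitting algorithm terminates and returns a partition of `C`,
provided the homogeneity condition `H` holds of every data set with fewer than `N`
elements (`N ≥ 2`), the cell is non-degenerate, and the (finite) data lie in `C`. -/
theorem split_terminates_and_partitions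
    (N : ℕ) (hN : 2 ≤ N) (H : Finset (ℝ × ℝ) → Prop)
    (hH : ∀ D : Finset (ℝ × ℝ), D.card < N → H D)
    (C : QuadCell) (hab : C.1 < C.2.1) (hcd : C.2.2.1 < C.2.2.2)
    (D : Finset (ℝ × ℝ)) (hD : ∀ p ∈ D, p ∈ C.toSet) :
    ∃ L : List QuadCell, SplitSpec H C D L ∧
      (⋃ r ∈ L, QuadCell.toSet r) = C.toSet ∧
      L.Pairwise (fun r r' => Disjoint (QuadCell.toSet r) (QuadCell.toSet r')) := by
  by_cases hsmall : D.card < N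
  · exact ⟨[C], SplitSpec.homog (hH D hsmall), by simp, by simp⟩
  have h2 : 1 < D.card := lt_of_lt_of_le Nat.one_lt_two (le_trans hN (not_lt.1 hsmall))
  obtain ⟨p, hp, q, hq, hpq⟩ := Finset.one_lt_card.1 h2
  set T : Finset ((ℝ × ℝ) × (ℝ × ℝ)) := (D ×ˢ D).filter (fun z => z.1 ≠ z.2) with hT
  have hTne : T.Nonempty := ⟨(p, q), by simp [hT, Finset.mem_filter, Finset.mem_product, hp, hq, hpq]⟩
  set δ : ℝ := T.inf' hTne (fun z => dist z.1 z.2) with hδ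
  have hδpos : 0 < δ := by
    rw [hδ, Finset.lt_inf'_iff]
    intro z hz
    have : z.1 ≠ z.2 := (Finset.mem_filter.1 hz).2
    exact dist_pos.2 this
  have hsep : ∀ p ∈ D, ∀ q ∈ D, p ≠ q → δ ≤ dist p q := by
    intro x hx y hy hxy
    have hmem : (x, y) ∈ T := by
      simp [hT, Finset.mem_filter, Finset.mem_product, hx, hy, hxy]
    exact Finset.inf'_le _ hmem
  obtain ⟨k, hk⟩ := pow_unbounded_of_one_lt
    (max (C.2.1 - C.1) (C.2.2.2 - C.2.2.1) / δ) (one_lt_two (α := ℝ))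
  have hk' : max (C.2.1 - C.1) (C.2.2.2 - C.2.2.1) < δ * 2 ^ k := by
    rw [div_lt_iff₀ hδpos] at hk
    calc max (C.2.1 - C.1) (C.2.2.2 - C.2.2.1) < 2 ^ k * δ := hk
    _ = δ * 2 ^ k := by ring
  exact split_key N hN H hH δ k C
    (lt_of_le_of_lt (le_max_left _ _) hk') (lt_of_le_of_lt (le_max_right _ _) hk') D hD hsep
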